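/- arXiv:1205.7082 — 2 statements merged into one kernel-verified Lean document; each statement's English description precedes it below -/
import Mathlib

section
/- Let A be a self-adjoint operator on a Hilbert space H, let g₁,…,g_r ∈ H (playing the role of ∇C_j(X*)) be linearly independent, and suppose there exist vectors v₁,…,v_r ∈ dom(A) with A v_j = −g_j for each j. Set J_{jk} = −⟨v_j, A v_k⟩ (the Jacobian ∂c/∂ω), assumed invertible. Then H = G^⊥ ⊕ span{v₁,…,v_r} where G = span{g₁,…,g_r}, and for each α ∈ {−,0,+}, σ_α(A) = σ_α(A|_{G^⊥}) + σ_α(−J), where J is regarded as a symmetric r×r matrix. -/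
set_option synthInstance.maxHeartbeats 400000
set_option maxHeartbeats 1000000

open Module RealInnerProductSpace

section auxdefs

variable {E F : Type*} [AddCommGroup E] [Module ℝ E] [AddCommGroup F] [Module ℝ F]

noncomputable def nIdx (q : E → ℝ) : ℕ∞ :=
  sSup {n : ℕ∞ | ∃ W : Submodule ℝ E, FiniteDimensional ℝ W ∧
    n = (Module.finrank ℝ W : ℕ∞) ∧ ∀ x ∈ W, x ≠ 0 → q x < 0}

lemma zero_mem_nIdxSet (q : E → ℝ) :
    (0:ℕ∞) ∈ {n : ℕ∞ | ∃ W : Submodule ℝ E, FiniteDimensional ℝ W ∧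
      n = (Module.finrank ℝ W : ℕ∞) ∧ ∀ x ∈ W, x ≠ 0 → q x < 0} := by
  refine ⟨⊥, inferInstance, by simp, ?_⟩
  intro x hx hx0
  exact absurd ((Submodule.mem_bot ℝ).mp hx) hx0

lemma sSup_drop_bot (p : Submodule ℝ E → Prop) :
    sSup {n : ℕ∞ | ∃ V : Submodule ℝ E, V ≠ ⊥ ∧ FiniteDimensional ℝ V ∧
        n = (Module.finrank ℝ V : ℕ∞) ∧ p V}
      = sSup {n : ℕ∞ | ∃ V : Submodule ℝ E, FiniteDimensional ℝ V ∧
        n = (Module.finrank ℝ V : ℕ∞) ∧ p V} := by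
  apply le_antisymm
  · apply sSup_le_sSup
    rintro n ⟨V, _, hfd, hn, hp⟩
    exact ⟨V, hfd, hn, hp⟩
  · apply sSup_le
    rintro n ⟨V, hfd, rfl, hp⟩
    by_cases hV : V = ⊥
    · subst hV; simp
    · exact le_sSup ⟨V, hV, hfd, rfl, hp⟩

lemma nIdx_le_of_equiv (e : E ≃ₗ[ℝ] F) (qE : E → ℝ) (qF : F → ℝ)
    (h : ∀ x, qE x = qF (e x)) : nIdx qE ≤ nIdx qF := by
  apply sSup_le_sSup
  rintro n ⟨W, hfd, rfl, hq⟩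
  refine ⟨W.map e.toLinearMap, inferInstance, ?_, ?_⟩
  · rw [LinearEquiv.finrank_map_eq]
  · rintro y hy hy0
    obtain ⟨x, hx, rfl⟩ := Submodule.mem_map.mp hy
    have hx0 : x ≠ 0 := fun h0 => hy0 (by simp [h0])
    have := hq x hx hx0
    rwa [h] at this

lemma nIdx_congr (e : E ≃ₗ[ℝ] F) (qE : E → ℝ) (qF : F → ℝ)
    (h : ∀ x, qE x = qF (e x)) : nIdx qE = nIdx qF := by
  apply le_antisymm
  · exact nIdx_le_of_equiv e qE qF h
  · exact nIdx_le_of_equiv e.symm qF qE (fun x => by rw [h (e.symm x), LinearEquiv.apply_symm_apply])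

lemma sSup_add_sSup_le {S1 S2 : Set ℕ∞} (h1 : S1.Nonempty) (h2 : S2.Nonempty) {X : ℕ∞}
    (h : ∀ a ∈ S1, ∀ b ∈ S2, a + b ≤ X) : sSup S1 + sSup S2 ≤ X := by
  haveI : Nonempty S1 := h1.to_subtype
  haveI : Nonempty S2 := h2.to_subtype
  rw [sSup_eq_iSup', sSup_eq_iSup']
  exact ENat.iSup_add_iSup_le fun i j => h i i.2 j j.2

end auxdefs


universe u

lemma lemC_aux : ∀ (n : ℕ) (V : Type u) [AddCommGroup V] [Module ℝ V] [FiniteDimensional ℝ V],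
    Module.finrank ℝ V ≤ n → ∀ (B : V →ₗ[ℝ] V →ₗ[ℝ] ℝ), (∀ x y, B x y = B y x) →
    ∃ N U : Submodule ℝ V, IsCompl N U ∧ (∀ x ∈ N, x ≠ 0 → B x x < 0) ∧
      (∀ x ∈ U, 0 ≤ B x x) := by
  intro n
  induction n with
  | zero =>
    intro V _ _ _ hn B _
    refine ⟨⊥, ⊤, isCompl_bot_top, ?_, ?_⟩
    · intro x hx hx0; exact absurd ((Submodule.mem_bot ℝ).mp hx) hx0
    · intro x _
      haveI : Subsingleton V := finrank_zero_iff.mp (Nat.le_zero.mp hn)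
      have : x = 0 := Subsingleton.elim x 0
      simp [this]
  | succ n ih =>
    intro V _ _ _ hn B hsym
    by_cases hpos : ∀ x : V, 0 ≤ B x x
    · exact ⟨⊥, ⊤, isCompl_bot_top,
        fun x hx hx0 => absurd ((Submodule.mem_bot ℝ).mp hx) hx0, fun x _ => hpos x⟩
    push_neg at hpos
    obtain ⟨x, hx⟩ := hpos
    have hxx : B x x ≠ 0 := ne_of_lt hx
    have hx0 : x ≠ 0 := by rintro rfl; simp at hxx
    set V' := LinearMap.ker (B x) with hV'
    have hmemV' : ∀ y, y ∈ V' ↔ B x y = 0 := fun y => LinearMap.mem_ker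
    have hdisj1 : Disjoint (Submodule.span ℝ {x}) V' := by
      rw [Submodule.disjoint_def]
      intro y hy hy'
      obtain ⟨c, rfl⟩ := Submodule.mem_span_singleton.mp hy
      have hc : c * B x x = 0 := by
        have := (hmemV' _).mp hy'
        simpa [smul_eq_mul] using this
      rcases mul_eq_zero.mp hc with h | h
      · simp [h]
      · exact absurd h hxx
    have hcod1 : Codisjoint (Submodule.span ℝ {x}) V' := by
      rw [codisjoint_iff_le_sup]
      intro y _
      refine Submodule.mem_sup.mpr ⟨(B x y / B x x) • x,
        Submodule.smul_mem _ _ (Submodule.mem_span_singleton_self x),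
        y - (B x y / B x x) • x, ?_, by abel⟩
      rw [hmemV', map_sub, map_smul, smul_eq_mul, div_mul_cancel₀ _ hxx, sub_self]
    have hcompl1 : IsCompl (Submodule.span ℝ {x}) V' := ⟨hdisj1, hcod1⟩
    have hrank : Module.finrank ℝ V' ≤ n := by
      have h1 := Submodule.finrank_add_eq_of_isCompl hcompl1
      rw [finrank_span_singleton hx0] at h1
      omega
    obtain ⟨N', U', hcompl', hN', hU'⟩ := ih ↥V' (le_of_eq rfl |>.trans hrank)
      (B.compl₁₂ V'.subtype V'.subtype) (fun a b => hsym _ _)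
    refine ⟨Submodule.span ℝ {x} ⊔ N'.map V'.subtype, U'.map V'.subtype, ⟨?_, ?_⟩, ?_, ?_⟩
    · -- disjoint
      rw [Submodule.disjoint_def]
      intro z hzN hzU
      obtain ⟨a, ha, m, hm, rfl⟩ := Submodule.mem_sup.mp hzN
      obtain ⟨c, rfl⟩ := Submodule.mem_span_singleton.mp ha
      have hmV : m ∈ V' := Submodule.map_subtype_le V' N' hm
      have hzV : c • x + m ∈ V' := Submodule.map_subtype_le V' U' hzU
      have hcx : c • x ∈ V' := by
        have : c • x = (c • x + m) - m := by abel
        rw [this]; exact Submodule.sub_mem _ hzV hmV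
      have hcx0 : c • x = 0 :=
        hdisj1.le_bot ⟨Submodule.smul_mem _ _ (Submodule.mem_span_singleton_self x), hcx⟩
      rw [hcx0, zero_add] at hzU ⊢
      obtain ⟨m', hm', hmeq⟩ := Submodule.mem_map.mp hm
      obtain ⟨u', hu', hueq⟩ := Submodule.mem_map.mp hzU
      have : m' = u' := Subtype.ext (by rw [show ((m' : V') : V) = m from hmeq,
        show ((u' : V') : V) = m from hueq])
      subst this
      have : m' ∈ N' ⊓ U' := ⟨hm', hu'⟩
      rw [hcompl'.inf_eq_bot] at this
      rw [← hmeq, (Submodule.mem_bot ℝ).mp this, map_zero]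
    · -- codisjoint
      rw [codisjoint_iff, sup_assoc, ← Submodule.map_sup, hcompl'.sup_eq_top,
        Submodule.map_top, Submodule.range_subtype]
      exact hcompl1.sup_eq_top
    · -- negative on N
      intro z hz hz0
      obtain ⟨a, ha, m, hm, rfl⟩ := Submodule.mem_sup.mp hz
      obtain ⟨c, rfl⟩ := Submodule.mem_span_singleton.mp ha
      obtain ⟨m', hm', rfl⟩ := Submodule.mem_map.mp hm
      simp only [Submodule.subtype_apply] at hz hz0 ⊢
      have hxm : B x ↑m' = 0 := (hmemV' _).mp m'.2
      have hmx : B (↑m' : V) x = 0 := by rw [hsym]; exact hxm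
      have expand : B (c • x + ↑m') (c • x + ↑m') = c * c * B x x + B ↑m' ↑m' := by
        simp only [map_add, map_smul, LinearMap.add_apply, LinearMap.smul_apply,
          smul_eq_mul, hxm, hmx, mul_zero, add_zero, zero_add]
        ring
      rw [expand]
      have hBm : ∀ (w : ↥V'), w ∈ N' → B (↑w : V) ↑w ≤ 0 := by
        intro w hw
        by_cases hw0 : w = 0
        · subst hw0; simp
        · exact le_of_lt (hN' w hw hw0)
      by_cases hc : c = 0
      · subst hc
        simp only [zero_smul, zero_add] at hz0 ⊢
        have hm0 : m' ≠ 0 := fun h => hz0 (by simp [h])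
        simpa using hN' m' hm' hm0
      · have h1 : c * c * B x x < 0 := mul_neg_of_pos_of_neg (mul_self_pos.mpr hc) hx
        exact add_neg_of_neg_of_nonpos h1 (hBm m' hm')
    · -- nonneg on U
      intro z hz
      obtain ⟨u', hu', rfl⟩ := Submodule.mem_map.mp hz
      simpa using hU' u' hu'

lemma finrank_map_eq_of_injOn {E : Type*} [AddCommGroup E] [Module ℝ E]
    {F : Type*} [AddCommGroup F] [Module ℝ F]
    (f : E →ₗ[ℝ] F) (N : Submodule ℝ E) [FiniteDimensional ℝ N]
    (hinj : ∀ z ∈ N, f z = 0 → z = 0) :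
    Module.finrank ℝ (N.map f) = Module.finrank ℝ N := by
  have hrange : LinearMap.range (f.comp N.subtype) = N.map f := by
    rw [LinearMap.range_comp, Submodule.range_subtype]
  have hker : LinearMap.ker (f.comp N.subtype) = ⊥ := by
    rw [LinearMap.ker_eq_bot']
    intro m hm
    exact Subtype.ext (hinj ↑m m.2 hm)
  have := LinearMap.finrank_range_add_finrank_ker (f.comp N.subtype)
  rw [hrange, hker, finrank_bot, add_zero] at this
  exact this

lemma nIdx_add {E : Type*} [AddCommGroup E] [Module ℝ E]
    (B : E →ₗ[ℝ] E →ₗ[ℝ] ℝ) (hsym : ∀ x y, B x y = B y x)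
    (W1 W2 : Submodule ℝ E) (hc : IsCompl W1 W2)
    (horth : ∀ x ∈ W1, ∀ y ∈ W2, B x y = 0) :
    nIdx (fun x => B x x) = nIdx (fun x : W1 => B x x) + nIdx (fun x : W2 => B x x) := by
  set p1 := W1.projectionOnto W2 hc with hp1
  set p2 := W2.projectionOnto W1 hc.symm with hp2
  have hsplit : ∀ z : E, (↑(p1 z) : E) + ↑(p2 z) = z :=
    fun z => Submodule.projection_add_projection_eq_self hc z
  have hcross : ∀ (a : W1) (b : W2), B ↑a ↑b = 0 ∧ B ↑b ↑a = 0 := by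
    intro a b
    constructor
    · exact horth ↑a a.2 ↑b b.2
    · rw [hsym]; exact horth ↑a a.2 ↑b b.2
  have hdecomp : ∀ z : E, B z z = B ↑(p1 z) ↑(p1 z) + B ↑(p2 z) ↑(p2 z) := by
    intro z
    conv_lhs => rw [← hsplit z]
    simp only [map_add, LinearMap.add_apply, (hcross (p1 z) (p2 z)).1,
      (hcross (p1 z) (p2 z)).2, add_zero, zero_add]
  apply le_antisymm
  · -- ≤ direction
    apply sSup_le
    rintro n ⟨V, hfd, rfl, hneg⟩
    set f1 : ↥V →ₗ[ℝ] E := W1.subtype.comp (p1.comp V.subtype) with hf1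
    set B1 := B.compl₁₂ f1 f1 with hB1
    obtain ⟨N, U, hNU, hN, hU⟩ := lemC_aux (Module.finrank ℝ ↥V) ↥V le_rfl B1
      (fun a b => hsym _ _)
    have hB1eq : ∀ z : ↥V, B1 z z = B ↑(p1 ↑z) ↑(p1 ↑z) := fun z => rfl
    have hcoe0 : ∀ z : ↥V, z ≠ 0 → (↑z : E) ≠ 0 := by
      intro z hz h0; exact hz (Subtype.ext h0)
    have hU2 : ∀ z ∈ U, z ≠ 0 → B ↑(p2 ↑z) ↑(p2 ↑z) < 0 := by
      intro z hzU hz0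
      have h1 := hneg ↑z z.2 (hcoe0 z hz0)
      have h2 := hU z hzU
      rw [hB1eq] at h2
      have := hdecomp ↑z
      linarith
    -- images
    set m1 : ↥V →ₗ[ℝ] ↥W1 := p1.comp V.subtype with hm1
    set m2 : ↥V →ₗ[ℝ] ↥W2 := p2.comp V.subtype with hm2
    have hinj1 : ∀ z ∈ N, m1 z = 0 → z = 0 := by
      intro z hz h0
      by_contra hz0
      have h1 := hN z hz hz0
      rw [hB1eq] at h1
      have : (↑(p1 ↑z) : E) = 0 := by
        rw [show p1 (↑z : E) = m1 z from rfl, h0, Submodule.coe_zero]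
      rw [this] at h1
      simp at h1
    have hinj2 : ∀ z ∈ U, m2 z = 0 → z = 0 := by
      intro z hz h0
      by_contra hz0
      have h1 := hU2 z hz hz0
      have : (↑(p2 ↑z) : E) = 0 := by
        rw [show p2 (↑z : E) = m2 z from rfl, h0, Submodule.coe_zero]
      rw [this] at h1
      simp at h1
    have hr1 : Module.finrank ℝ (N.map m1) = Module.finrank ℝ N :=
      finrank_map_eq_of_injOn m1 N hinj1
    have hr2 : Module.finrank ℝ (U.map m2) = Module.finrank ℝ U :=
      finrank_map_eq_of_injOn m2 U hinj2
    have hmem1 : (Module.finrank ℝ (N.map m1) : ℕ∞) ∈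
        {n : ℕ∞ | ∃ W : Submodule ℝ ↥W1, FiniteDimensional ℝ W ∧
          n = (Module.finrank ℝ W : ℕ∞) ∧ ∀ x ∈ W, x ≠ 0 → B ↑x ↑x < 0} := by
      refine ⟨N.map m1, inferInstance, rfl, ?_⟩
      rintro y hy hy0
      obtain ⟨z, hz, rfl⟩ := Submodule.mem_map.mp hy
      have hz0 : z ≠ 0 := fun h => hy0 (by rw [h, map_zero])
      have := hN z hz hz0
      rwa [hB1eq] at this
    have hmem2 : (Module.finrank ℝ (U.map m2) : ℕ∞) ∈
        {n : ℕ∞ | ∃ W : Submodule ℝ ↥W2, FiniteDimensional ℝ W ∧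
          n = (Module.finrank ℝ W : ℕ∞) ∧ ∀ x ∈ W, x ≠ 0 → B ↑x ↑x < 0} := by
      refine ⟨U.map m2, inferInstance, rfl, ?_⟩
      rintro y hy hy0
      obtain ⟨z, hz, rfl⟩ := Submodule.mem_map.mp hy
      have hz0 : z ≠ 0 := fun h => hy0 (by rw [h, map_zero])
      exact hU2 z hz hz0
    have hsum : Module.finrank ℝ ↥V = Module.finrank ℝ N + Module.finrank ℝ U :=
      (Submodule.finrank_add_eq_of_isCompl hNU).symm
    calc (Module.finrank ℝ ↥V : ℕ∞)
        = (Module.finrank ℝ (N.map m1) : ℕ∞) + (Module.finrank ℝ (U.map m2) : ℕ∞) := by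
          rw [hr1, hr2, hsum]; push_cast; ring
      _ ≤ _ := add_le_add (le_sSup hmem1) (le_sSup hmem2)
  · -- ≥ direction
    apply sSup_add_sSup_le ⟨0, zero_mem_nIdxSet _⟩ ⟨0, zero_mem_nIdxSet _⟩
    rintro a ⟨V1, hfd1, rfl, hq1⟩ b ⟨V2, hfd2, rfl, hq2⟩
    set T1 := V1.map W1.subtype with hT1
    set T2 := V2.map W2.subtype with hT2
    have hT1le : T1 ≤ W1 := Submodule.map_subtype_le W1 V1
    have hT2le : T2 ≤ W2 := Submodule.map_subtype_le W2 V2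
    have hTdisj : T1 ⊓ T2 = ⊥ := by
      rw [← le_bot_iff]
      intro z hz
      exact (hc.disjoint.le_bot) ⟨hT1le hz.1, hT2le hz.2⟩
    have hrk1 : Module.finrank ℝ T1 = Module.finrank ℝ V1 :=
      finrank_map_eq_of_injOn W1.subtype V1
        (fun z _ h => by simpa using Subtype.ext_iff.mpr (by simpa using h))
    have hrk2 : Module.finrank ℝ T2 = Module.finrank ℝ V2 :=
      finrank_map_eq_of_injOn W2.subtype V2
        (fun z _ h => by simpa using Subtype.ext_iff.mpr (by simpa using h))
    have hneg1 : ∀ t ∈ T1, B t t ≤ 0 := by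
      intro t ht
      by_cases ht0 : t = 0
      · simp [ht0]
      obtain ⟨y, hy, rfl⟩ := Submodule.mem_map.mp ht
      have hy0 : y ≠ 0 := fun h => ht0 (by rw [h, map_zero])
      exact le_of_lt (hq1 y hy hy0)
    have hneg2 : ∀ t ∈ T2, B t t ≤ 0 := by
      intro t ht
      by_cases ht0 : t = 0
      · simp [ht0]
      obtain ⟨y, hy, rfl⟩ := Submodule.mem_map.mp ht
      have hy0 : y ≠ 0 := fun h => ht0 (by rw [h, map_zero])
      exact le_of_lt (hq2 y hy hy0)
    have hmem : ((Module.finrank ℝ V1 : ℕ∞) + (Module.finrank ℝ V2 : ℕ∞)) ∈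
        {n : ℕ∞ | ∃ W : Submodule ℝ E, FiniteDimensional ℝ W ∧
          n = (Module.finrank ℝ W : ℕ∞) ∧ ∀ x ∈ W, x ≠ 0 → B x x < 0} := by
      refine ⟨T1 ⊔ T2, inferInstance, ?_, ?_⟩
      · have := Submodule.finrank_sup_add_finrank_inf_eq T1 T2
        rw [hTdisj, finrank_bot, add_zero] at this
        rw [this, hrk1, hrk2]
        push_cast; ring
      · intro z hz hz0
        obtain ⟨t1, ht1, t2, ht2, rfl⟩ := Submodule.mem_sup.mp hz
        have hcr1 : B t1 t2 = 0 := horth t1 (hT1le ht1) t2 (hT2le ht2)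
        have hcr2 : B t2 t1 = 0 := by rw [hsym]; exact hcr1
        have hdec : B (t1 + t2) (t1 + t2) = B t1 t1 + B t2 t2 := by
          simp only [map_add, LinearMap.add_apply, hcr1, hcr2, add_zero, zero_add]
        rw [hdec]
        have h1 := hneg1 t1 ht1
        have h2 := hneg2 t2 ht2
        rcases eq_or_ne t1 0 with h | h
        · rcases eq_or_ne t2 0 with h' | h'
          · exact absurd (by rw [h, h', add_zero]) hz0
          · obtain ⟨y, hy, rfl⟩ := Submodule.mem_map.mp ht2
            have hy0 : y ≠ 0 := fun hh => h' (by rw [hh, map_zero])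
            have h3 : B (W2.subtype y) (W2.subtype y) < 0 := hq2 y hy hy0
            linarith
        · obtain ⟨y, hy, rfl⟩ := Submodule.mem_map.mp ht1
          have hy0 : y ≠ 0 := fun hh => h (by rw [hh, map_zero])
          have h3 : B (W1.subtype y) (W1.subtype y) < 0 := hq1 y hy hy0
          linarith
    exact le_sSup hmem

noncomputable def sigNeg' {E : Type*} [NormedAddCommGroup E]
    [InnerProductSpace ℝ E] (Q : E →ₗ[ℝ] E) : ℕ∞ :=
  sSup {n : ℕ∞ | ∃ V : Submodule ℝ E, V ≠ ⊥ ∧ FiniteDimensional ℝ V ∧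
    n = (Module.finrank ℝ V : ℕ∞) ∧ ∀ x ∈ V, x ≠ 0 → ⟪x, Q x⟫ < 0}

noncomputable def sigZero {E : Type*} [NormedAddCommGroup E]
    [InnerProductSpace ℝ E] (Q : E →ₗ[ℝ] E) : ℕ∞ :=
  sSup {n : ℕ∞ | ∃ V : Submodule ℝ E, V ≠ ⊥ ∧ FiniteDimensional ℝ V ∧
    n = (Module.finrank ℝ V : ℕ∞) ∧ ∀ x ∈ V, Q x = 0}

noncomputable def sigPos' {E : Type*} [NormedAddCommGroup E]
    [InnerProductSpace ℝ E] (Q : E →ₗ[ℝ] E) : ℕ∞ :=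
  sSup {n : ℕ∞ | ∃ V : Submodule ℝ E, V ≠ ⊥ ∧ FiniteDimensional ℝ V ∧
    n = (Module.finrank ℝ V : ℕ∞) ∧ ∀ x ∈ V, x ≠ 0 → 0 < ⟪x, Q x⟫}

section sigtrans

variable {E : Type*} [NormedAddCommGroup E] [InnerProductSpace ℝ E]

lemma sigNeg_eq_nIdx (Q : E →ₗ[ℝ] E) : sigNeg' Q = nIdx (fun x => ⟪x, Q x⟫) :=
  sSup_drop_bot (fun V => ∀ x ∈ V, x ≠ 0 → ⟪x, Q x⟫ < 0)

lemma sigPos_eq_nIdx (Q : E →ₗ[ℝ] E) : sigPos' Q = nIdx (fun x => -⟪x, Q x⟫) := by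
  have h : sigPos' Q = sSup {n : ℕ∞ | ∃ V : Submodule ℝ E, V ≠ ⊥ ∧ FiniteDimensional ℝ V ∧
      n = (Module.finrank ℝ V : ℕ∞) ∧ ∀ x ∈ V, x ≠ 0 → -⟪x, Q x⟫ < 0} := by
    unfold sigPos'
    congr 1
    ext n
    constructor
    · rintro ⟨V, h1, h2, h3, h4⟩
      exact ⟨V, h1, h2, h3, fun x hx hx0 => neg_lt_zero.mpr (h4 x hx hx0)⟩
    · rintro ⟨V, h1, h2, h3, h4⟩
      exact ⟨V, h1, h2, h3, fun x hx hx0 => neg_lt_zero.mp (h4 x hx hx0)⟩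
  rw [h]
  exact sSup_drop_bot (fun V => ∀ x ∈ V, x ≠ 0 → -⟪x, Q x⟫ < 0)

lemma sigZero_eq_sSup (Q : E →ₗ[ℝ] E) : sigZero Q =
    sSup {n : ℕ∞ | ∃ V : Submodule ℝ E, FiniteDimensional ℝ V ∧
      n = (Module.finrank ℝ V : ℕ∞) ∧ ∀ x ∈ V, Q x = 0} :=
  sSup_drop_bot (fun V => ∀ x ∈ V, Q x = 0)

end sigtrans

/-- The key signature identity: for a self-adjoint `A` with `A vⱼ = -gⱼ`
(`gⱼ` the constraint gradients) and invertible Jacobian `J = (-⟨vⱼ, A vₖ⟩)`,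
the space splits as `H = Gᗮ ⊕ span{vⱼ}` and
`σ_α(A) = σ_α(A|_{Gᗮ}) + σ_α(-J)` for each `α ∈ {-,0,+}`. -/
theorem signature_identity
    {H : Type*} [NormedAddCommGroup H] [InnerProductSpace ℝ H] [CompleteSpace H]
    {r : ℕ} (A : H →ₗ[ℝ] H) (hA : LinearMap.IsSymmetric A)
    (g v : Fin r → H) (hg : LinearIndependent ℝ g)
    (hAv : ∀ j, A (v j) = -(g j))
    (J : Matrix (Fin r) (Fin r) ℝ) (hJ : ∀ j k, J j k = -⟪v j, A (v k)⟫)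
    (hJinv : IsUnit J.det)
    (G : Submodule ℝ H) (hG : G = Submodule.span ℝ (Set.range g))
    (Ares : ↥Gᗮ →ₗ[ℝ] ↥Gᗮ)
    (hAres : ∀ x : ↥Gᗮ, Ares x = Submodule.orthogonalProjectionOnto Gᗮ (A x)) :
    IsCompl Gᗮ (Submodule.span ℝ (Set.range v)) ∧
    sigNeg' A = sigNeg' Ares + sigNeg' (Matrix.toEuclideanLin (-J)) ∧
    sigZero A = sigZero Ares + sigZero (Matrix.toEuclideanLin (-J)) ∧
    sigPos' A = sigPos' Ares + sigPos' (Matrix.toEuclideanLin (-J)) := by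
  haveI : FiniteDimensional ℝ G := by
    rw [hG]; exact FiniteDimensional.span_of_finite ℝ (Set.finite_range g)
  set W2 : Submodule ℝ H := Submodule.span ℝ (Set.range v) with hW2
  -- membership criterion for Gᗮ
  have mem_Gperp : ∀ {x : H}, (∀ m, ⟪g m, x⟫ = 0) → x ∈ Gᗮ := by
    intro x hx
    rw [Submodule.mem_orthogonal]
    intro u hu
    rw [hG] at hu
    induction hu using Submodule.span_induction with
    | mem u hu => obtain ⟨m, rfl⟩ := hu; exact hx m
    | zero => simp
    | add u w _ _ hu hw => rw [inner_add_left, hu, hw, add_zero]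
    | smul c u _ hu => rw [real_inner_smul_left, hu, mul_zero]
  have hGperp_inner : ∀ {x : H}, x ∈ Gᗮ → ∀ m, ⟪g m, x⟫ = 0 := by
    intro x hx m
    exact (Submodule.mem_orthogonal _ _).mp hx (g m) (by rw [hG]; exact Submodule.subset_span ⟨m, rfl⟩)
  have hvg : ∀ j m, ⟪v j, g m⟫ = J j m := by
    intro j m
    rw [hJ j m, hAv m, inner_neg_right, neg_neg]
  have hgv : ∀ m j, ⟪g m, v j⟫ = J j m := by
    intro m j
    rw [real_inner_comm]; exact hvg j m
  have hsumc : ∀ (c : Fin r → ℝ) (m : Fin r), ⟪g m, ∑ j, c j • v j⟫ = (Matrix.vecMul c J) m := by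
    intro c m
    rw [inner_sum]
    simp only [real_inner_smul_right, hgv]
    simp [Matrix.vecMul, dotProduct, mul_comm]
  have hJinv' : Invertible J := J.invertibleOfIsUnitDet hJinv
  have hc0 : ∀ c : Fin r → ℝ, Matrix.vecMul c J = 0 → c = 0 := by
    intro c hc
    have : Matrix.vecMul (Matrix.vecMul c J) J⁻¹ = Matrix.vecMul 0 J⁻¹ := by rw [hc]
    rwa [Matrix.vecMul_vecMul, Matrix.mul_nonsing_inv J hJinv, Matrix.vecMul_one,
      Matrix.zero_vecMul] at this
  have hvli : LinearIndependent ℝ v := by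
    rw [Fintype.linearIndependent_iff]
    intro c hc i
    have hcv : Matrix.vecMul c J = 0 := by
      funext m
      rw [← hsumc c m, hc, inner_zero_right]
      rfl
    rw [hc0 c hcv]
    rfl
  have hdisj : Disjoint Gᗮ W2 := by
    rw [Submodule.disjoint_def]
    intro x hxG hxW
    obtain ⟨c, rfl⟩ := (Submodule.mem_span_range_iff_exists_fun ℝ).mp hxW
    have hcv : Matrix.vecMul c J = 0 := by
      funext m
      rw [← hsumc c m]
      exact hGperp_inner hxG m
    rw [hc0 c hcv]
    simp
  have hcodis : Codisjoint Gᗮ W2 := by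
    rw [codisjoint_iff_le_sup]
    intro x _
    set w : Fin r → ℝ := fun m => ⟪g m, x⟫ with hw
    set c : Fin r → ℝ := Matrix.vecMul w J⁻¹ with hc
    have hcJ : Matrix.vecMul c J = w := by
      rw [hc, Matrix.vecMul_vecMul, Matrix.nonsing_inv_mul J hJinv, Matrix.vecMul_one]
    refine Submodule.mem_sup.mpr ⟨x - ∑ j, c j • v j, ?_, ∑ j, c j • v j, ?_, by abel⟩
    · apply mem_Gperp
      intro m
      rw [inner_sub_right, hsumc c m, hcJ]
      simp [hw]
    · exact Submodule.sum_mem _ fun j _ =>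
        Submodule.smul_mem _ _ (Submodule.subset_span ⟨j, rfl⟩)
  have hcompl : IsCompl Gᗮ W2 := ⟨hdisj, hcodis⟩
  -- the bilinear form of A
  set B : H →ₗ[ℝ] H →ₗ[ℝ] ℝ := LinearMap.mk₂ ℝ (fun x y => ⟪x, A y⟫)
    (fun m₁ m₂ n => by simp [inner_add_left])
    (fun c m n => by simp [real_inner_smul_left])
    (fun m n₁ n₂ => by simp [inner_add_right])
    (fun c m n => by simp [real_inner_smul_right]) with hB
  have hBapp : ∀ x y : H, B x y = ⟪x, A y⟫ := fun x y => rfl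
  have hsymB : ∀ x y : H, B x y = B y x := by
    intro x y
    rw [hBapp, hBapp, ← hA x y, real_inner_comm]
  have horthB : ∀ x ∈ Gᗮ, ∀ y ∈ W2, B x y = 0 := by
    intro x hx y hy
    induction hy using Submodule.span_induction with
    | mem y hy =>
      obtain ⟨j, rfl⟩ := hy
      rw [hBapp, hAv j, inner_neg_right,
        Submodule.inner_left_of_mem_orthogonal
          (by rw [hG]; exact Submodule.subset_span ⟨j, rfl⟩) hx, neg_zero]
    | zero => rw [map_zero]
    | add u w _ _ hu hw => rw [map_add, hu, hw, add_zero]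
    | smul c u _ hu => rw [map_smul, hu, smul_zero]
  -- restricted form on Gᗮ agrees with Ares
  have hqres : ∀ x : ↥Gᗮ, (⟪x, Ares x⟫ : ℝ) = B ↑x ↑x := by
    intro x
    rw [hAres x, hBapp, Submodule.coe_inner]
    have hmem : A ↑x - ↑(Submodule.orthogonalProjectionOnto Gᗮ (A ↑x)) ∈ Gᗮᗮ :=
      Submodule.sub_starProjection_mem_orthogonal (K := Gᗮ) (A ↑x)
    have h0 : ⟪(↑x : H), A ↑x - ↑(Submodule.orthogonalProjectionOnto Gᗮ (A ↑x))⟫ = 0 :=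
      Submodule.inner_right_of_mem_orthogonal x.2 hmem
    rw [inner_sub_right, sub_eq_zero] at h0
    exact h0.symm
  -- the Euclidean equivalence with span v
  set bs : Basis (Fin r) ℝ ↥W2 := Basis.span hvli with hbs
  set e : EuclideanSpace ℝ (Fin r) ≃ₗ[ℝ] ↥W2 :=
    (WithLp.linearEquiv 2 ℝ (Fin r → ℝ)).trans bs.equivFun.symm with he
  have hecoe : ∀ c : EuclideanSpace ℝ (Fin r), (↑(e c) : H) = ∑ i, c i • v i := by
    intro c
    rw [he]
    simp only [LinearEquiv.trans_apply, Basis.equivFun_symm_apply, Submodule.coe_sum,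
      SetLike.val_smul, hbs, WithLp.linearEquiv_apply]
    apply Finset.sum_congr rfl
    intro i _
    rw [Basis.span_apply]
    rfl
  have hBvv : ∀ i j, B (v i) (v j) = -(J i j) := by
    intro i j
    have := hJ i j
    rw [hBapp]
    linarith
  have hJsymm : ∀ i j, J i j = J j i := by
    intro i j
    rw [hJ i j, hJ j i, ← hA (v i) (v j), real_inner_comm]
  have hqE : ∀ c : EuclideanSpace ℝ (Fin r),
      (⟪c, Matrix.toEuclideanLin (-J) c⟫ : ℝ) = B ↑(e c) ↑(e c) := by
    intro c
    rw [hecoe]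
    have hTL : ∀ i, (Matrix.toEuclideanLin (-J) c) i = ∑ j, -J i j * c j := by
      intro i
      simp [Matrix.toEuclideanLin_apply, Matrix.mulVec, dotProduct]
    rw [PiLp.inner_apply]
    simp only [RCLike.inner_apply, conj_trivial, hTL, map_sum, LinearMap.sum_apply,
      map_smul, LinearMap.smul_apply, smul_eq_mul, hBvv, Finset.mul_sum]
    apply Finset.sum_congr rfl
    intro i _
    rw [Finset.sum_mul]
    apply Finset.sum_congr rfl
    intro j _
    rw [hJsymm j i]
    ring
  refine ⟨hcompl, ?_, ?_, ?_⟩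
  · -- sigNeg
    rw [sigNeg_eq_nIdx, sigNeg_eq_nIdx, sigNeg_eq_nIdx]
    have h2 : nIdx (fun x : ↥Gᗮ => (⟪x, Ares x⟫ : ℝ)) = nIdx (fun x : ↥Gᗮ => B ↑x ↑x) :=
      congrArg nIdx (funext hqres)
    have h3 : nIdx (fun c : EuclideanSpace ℝ (Fin r) =>
        (⟪c, Matrix.toEuclideanLin (-J) c⟫ : ℝ)) = nIdx (fun x : ↥W2 => B ↑x ↑x) :=
      nIdx_congr e _ _ hqE
    rw [h2, h3]
    exact nIdx_add B hsymB Gᗮ W2 hcompl horthB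
  · -- sigZero
    have hkerA_sub : ∀ x : H, A x = 0 → x ∈ Gᗮ := by
      intro x hx
      apply mem_Gperp
      intro m
      have hgm : g m = -(A (v m)) := by rw [hAv m, neg_neg]
      rw [hgm, inner_neg_left, hA (v m) x, hx, inner_zero_right, neg_zero]
    have horto : Gᗮᗮ = G := Submodule.orthogonal_orthogonal G
    have hker_iff : ∀ x : ↥Gᗮ, Ares x = 0 ↔ A ↑x = 0 := by
      intro x
      constructor
      · intro h
        have hmem : A ↑x ∈ Gᗮᗮ := by
          have hsub : A ↑x - ↑(Submodule.orthogonalProjectionOnto Gᗮ (A ↑x)) ∈ Gᗮᗮ :=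
              Submodule.sub_starProjection_mem_orthogonal (K := Gᗮ) (A ↑x)
          rw [← hAres x, h] at hsub
          simpa using hsub
        rw [horto] at hmem
        have hmem2 : A ↑x ∈ Submodule.span ℝ (Set.range g) := by
          rw [← hG]; exact hmem
        obtain ⟨c, hc⟩ := (Submodule.mem_span_range_iff_exists_fun ℝ).mp hmem2
        have hz : A (↑x + ∑ k, c k • v k) = 0 := by
          rw [map_add, map_sum]
          simp only [map_smul, hAv, smul_neg]
          rw [Finset.sum_neg_distrib, hc]
          abel
        have hzG : (↑x : H) + ∑ k, c k • v k ∈ Gᗮ := hkerA_sub _ hz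
        have hsumG : (∑ k, c k • v k) ∈ Gᗮ := by
          have hdd := Submodule.sub_mem Gᗮ hzG x.2
          simpa using hdd
        have hsumW : (∑ k, c k • v k) ∈ W2 :=
          Submodule.sum_mem _ fun k _ =>
            Submodule.smul_mem _ _ (Submodule.subset_span ⟨k, rfl⟩)
        have h0 : (∑ k, c k • v k) = 0 := by
          have hdd := hdisj.le_bot ⟨hsumG, hsumW⟩
          simpa using hdd
        rw [h0, add_zero] at hz
        exact hz
      · intro h
        rw [hAres x, h, map_zero]
    rw [sigZero_eq_sSup, sigZero_eq_sSup, sigZero_eq_sSup]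
    have hzero3 : sSup {n : ℕ∞ | ∃ V : Submodule ℝ (EuclideanSpace ℝ (Fin r)),
        FiniteDimensional ℝ V ∧ n = (Module.finrank ℝ V : ℕ∞) ∧
        ∀ x ∈ V, Matrix.toEuclideanLin (-J) x = 0} = 0 := by
      apply le_antisymm _ zero_le
      apply sSup_le
      rintro n ⟨V, hfd, rfl, hker⟩
      have hV : V = ⊥ := by
        rw [Submodule.eq_bot_iff]
        intro x hx
        have h := hker x hx
        have hJv : J.mulVec (WithLp.equiv 2 (Fin r → ℝ) x) = 0 := by
          have h2 := congrArg (WithLp.equiv 2 (Fin r → ℝ)) h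
          simpa [Matrix.toEuclideanLin_apply, Matrix.neg_mulVec, neg_eq_zero] using h2
        have hx0 : WithLp.equiv 2 (Fin r → ℝ) x = 0 := by
          have h2 : J⁻¹.mulVec (J.mulVec (WithLp.equiv 2 (Fin r → ℝ) x)) = 0 := by
            rw [hJv, Matrix.mulVec_zero]
          rwa [Matrix.mulVec_mulVec, Matrix.nonsing_inv_mul J hJinv,
            Matrix.one_mulVec] at h2
        simpa using congrArg (WithLp.equiv 2 (Fin r → ℝ)).symm hx0
      rw [hV]
      simp
    rw [hzero3, add_zero]
    congr 1
    ext n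
    constructor
    · rintro ⟨V, hfd, rfl, hker⟩
      have hle : V ≤ Gᗮ := fun x hx => hkerA_sub x (hker x hx)
      set V' := V.comap Gᗮ.subtype with hV'
      have hmap : V'.map Gᗮ.subtype = V := by
        rw [hV', Submodule.map_comap_subtype, inf_eq_right.mpr hle]
      have e' : ↥V' ≃ₗ[ℝ] ↥V :=
        (Submodule.equivMapOfInjective Gᗮ.subtype (Submodule.injective_subtype Gᗮ) V').trans
          (LinearEquiv.ofEq _ _ hmap)
      haveI : FiniteDimensional ℝ ↥V' := Module.Finite.equiv e'.symm
      refine ⟨V', inferInstance, by rw [e'.finrank_eq], ?_⟩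
      intro x hx
      exact (hker_iff x).mpr (hker ↑x (Submodule.mem_comap.mp hx))
    · rintro ⟨V', hfd, rfl, hker⟩
      have e' := Submodule.equivMapOfInjective Gᗮ.subtype (Submodule.injective_subtype Gᗮ) V'
      refine ⟨V'.map Gᗮ.subtype, Module.Finite.equiv e', by rw [e'.finrank_eq], ?_⟩
      intro x hx
      obtain ⟨y, hy, rfl⟩ := Submodule.mem_map.mp hx
      exact (hker_iff y).mp (hker y hy)
  · -- sigPos
    rw [sigPos_eq_nIdx, sigPos_eq_nIdx, sigPos_eq_nIdx]
    have h2 : nIdx (fun x : ↥Gᗮ => -(⟪x, Ares x⟫ : ℝ)) = nIdx (fun x : ↥Gᗮ => (-B) ↑x ↑x) :=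
      congrArg nIdx (funext (fun x => by
        rw [hqres x]; rfl))
    have h3 : nIdx (fun c : EuclideanSpace ℝ (Fin r) =>
        -(⟪c, Matrix.toEuclideanLin (-J) c⟫ : ℝ)) = nIdx (fun x : ↥W2 => (-B) ↑x ↑x) :=
      nIdx_congr e _ _ (fun c => by rw [hqE c]; rfl)
    rw [h2, h3]
    exact nIdx_add (-B) (fun x y => by
        simp only [LinearMap.neg_apply, neg_inj]; exact hsymB x y)
      Gᗮ W2 hcompl (fun x hx y hy => by
        simp only [LinearMap.neg_apply, neg_eq_zero]; exact horthB x hx y hy)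
end

section
/- Let a, b : ℝ → ℝ be continuous with a(u) ≥ a₀ > 0 and b(u) ≥ b₀ > 0, let δ > 0, let u*, v* be continuous 1-periodic functions, and define on L²[0,1] × H²_per[0,1] the operator A = [[a(u*)/b(u*), −1],[−1, Ã]] where Ã = −(1/δ)(d²/dx² + g'(v*)). Then with S = [[a(u*)/b(u*), 0],[−1, 1]] and T = diag(b(u*)/a(u*), Ã − b(u*)/a(u*)), one has A = S* T S, and consequently σ_α(A) = σ_α(T) for each α ∈ {−,0,+}; in particular, if the operator Ã − b(u*)/a(u*) has exactly one simple negative eigenvalue, then σ_−(A) = 1. -/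
open Module RealInnerProductSpace ContinuousLinearMap

noncomputable def sigNegOp {E : Type*} [NormedAddCommGroup E]
    [InnerProductSpace ℝ E] (Q : E →ₗ[ℝ] E) : ℕ∞ :=
  sSup {n : ℕ∞ | ∃ V : Submodule ℝ E, V ≠ ⊥ ∧ FiniteDimensional ℝ V ∧
    n = (Module.finrank ℝ V : ℕ∞) ∧ ∀ x ∈ V, x ≠ 0 → ⟪x, Q x⟫ < 0}

noncomputable def sigPosOp {E : Type*} [NormedAddCommGroup E]
    [InnerProductSpace ℝ E] (Q : E →ₗ[ℝ] E) : ℕ∞ :=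
  sSup {n : ℕ∞ | ∃ V : Submodule ℝ E, V ≠ ⊥ ∧ FiniteDimensional ℝ V ∧
    n = (Module.finrank ℝ V : ℕ∞) ∧ ∀ x ∈ V, x ≠ 0 → 0 < ⟪x, Q x⟫}

/-- One inclusion of Sylvester's law of inertia at the level of the defining sets:
pushing forward negative/zero/positive subspaces along an invertible map. -/
lemma sig_set_subset {E : Type*} [NormedAddCommGroup E] [InnerProductSpace ℝ E]
    (p q : E → Prop) (S : E →L[ℝ] E)
    (hSinj : Function.Injective S)
    (hpq : ∀ x, p x → q (S x)) :
    {n : ℕ∞ | ∃ V : Submodule ℝ E, V ≠ ⊥ ∧ FiniteDimensional ℝ V ∧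
      n = (Module.finrank ℝ V : ℕ∞) ∧ ∀ x ∈ V, p x} ⊆
    {n : ℕ∞ | ∃ V : Submodule ℝ E, V ≠ ⊥ ∧ FiniteDimensional ℝ V ∧
      n = (Module.finrank ℝ V : ℕ∞) ∧ ∀ x ∈ V, q x} := by
  rintro n ⟨V, hVbot, hfd, hn, hp⟩
  have hSinj' : Function.Injective (S : E →ₗ[ℝ] E) := hSinj
  refine ⟨V.map (S : E →ₗ[ℝ] E), ?_, ?_, ?_, ?_⟩
  · obtain ⟨x, hxV, hx0⟩ := Submodule.exists_mem_ne_zero_of_ne_bot hVbot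
    refine Submodule.ne_bot_iff _ |>.2 ⟨S x, Submodule.mem_map_of_mem hxV, ?_⟩
    intro h
    exact hx0 (hSinj (by simpa using h))
  · exact Module.Finite.equiv (Submodule.equivMapOfInjective _ hSinj' V)
  · rw [hn]
    exact congrArg (fun k : ℕ => (k : ℕ∞))
      (LinearEquiv.finrank_eq (Submodule.equivMapOfInjective _ hSinj' V))
  · rintro y ⟨x, hxV, rfl⟩
    exact hpq x (hp x hxV)

lemma sig_set_congr {E : Type*} [NormedAddCommGroup E] [InnerProductSpace ℝ E]
    (p q : E → Prop) (S R : E →L[ℝ] E)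
    (hSR : ∀ y, S (R y) = y) (hRS : ∀ x, R (S x) = x)
    (hpq : ∀ x, p x ↔ q (S x)) :
    {n : ℕ∞ | ∃ V : Submodule ℝ E, V ≠ ⊥ ∧ FiniteDimensional ℝ V ∧
      n = (Module.finrank ℝ V : ℕ∞) ∧ ∀ x ∈ V, p x} =
    {n : ℕ∞ | ∃ V : Submodule ℝ E, V ≠ ⊥ ∧ FiniteDimensional ℝ V ∧
      n = (Module.finrank ℝ V : ℕ∞) ∧ ∀ x ∈ V, q x} := by
  have hSinj : Function.Injective S := Function.LeftInverse.injective hRS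
  have hRinj : Function.Injective R := Function.LeftInverse.injective hSR
  apply Set.Subset.antisymm
  · exact sig_set_subset p q S hSinj fun x hx => (hpq x).1 hx
  · refine sig_set_subset q p R hRinj fun y hy => ?_
    exact (hpq (R y)).2 (by rwa [hSR])

/-- The factorization `A = S* T S` for the constrained Hessian of the coupled
conservative–reaction diffusion system: `H` models the scalar component space
(`L²[0,1]`, resp. `H²_per[0,1]`), `m` is the (bounded, self-adjoint, positive,
invertible) operator of multiplication by `a(u*)/b(u*)`, `m'` its inverse
(multiplication by `b(u*)/a(u*)`), and `Ã = -(1/δ)(d²/dx² + g'(v*))` is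
symmetric.  With the block operators `A = [[m, -1],[-1, Ã]]`,
`S = [[m, 0],[-1, 1]]` and `T = diag(m', Ã - m')` one has `A = S* T S`, hence
`σ_α(A) = σ_α(T)` for each `α ∈ {-,0,+}`; in particular if `Ã - m'` has
exactly one simple negative eigenvalue then `σ₋(A) = 1`. -/
theorem keller_segel_hessian_factorization
    {H : Type*} [NormedAddCommGroup H] [InnerProductSpace ℝ H] [CompleteSpace H]
    (m m' : H →L[ℝ] H)
    (hm : IsSelfAdjoint m) (hm' : IsSelfAdjoint m')
    (hmpos : ∀ x : H, x ≠ 0 → 0 < ⟪x, m x⟫)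
    (hm'pos : ∀ x : H, x ≠ 0 → 0 < ⟪x, m' x⟫)
    (hinv : m.comp m' = ContinuousLinearMap.id ℝ H)
    (hinv' : m'.comp m = ContinuousLinearMap.id ℝ H)
    (At : H →ₗ[ℝ] H) (hAt : LinearMap.IsSymmetric At)
    (e : WithLp 2 (H × H) ≃ₗ[ℝ] H × H)
    (he : e = WithLp.linearEquiv 2 ℝ (H × H))
    (A T : WithLp 2 (H × H) →ₗ[ℝ] WithLp 2 (H × H))
    (S : WithLp 2 (H × H) →L[ℝ] WithLp 2 (H × H))
    (hA : ∀ z, e (A z) = (m ((e z).1) - (e z).2, At ((e z).2) - (e z).1))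
    (hT : ∀ z, e (T z) = (m' ((e z).1), At ((e z).2) - m' ((e z).2)))
    (hS : ∀ z, e (S z) = (m ((e z).1) - (e z).2, (e z).2)) :
    A = (ContinuousLinearMap.adjoint S).toLinearMap ∘ₗ T ∘ₗ S.toLinearMap ∧
    (sigNegOp A = sigNegOp T ∧ sigZero A = sigZero T ∧ sigPosOp A = sigPosOp T) ∧
    ((∃ (ψ : H) (lam : ℝ), ψ ≠ 0 ∧ lam < 0 ∧ At ψ - m' ψ = lam • ψ ∧
        ∀ x : H, ⟪ψ, x⟫ = 0 → 0 ≤ ⟪x, At x - m' x⟫) →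
      sigNegOp A = 1) := by
  subst he
  -- pointwise inverse relations for `m` and `m'`
  have hmm' : ∀ x : H, m (m' x) = x := fun x => DFunLike.congr_fun hinv x
  have hm'm : ∀ x : H, m' (m x) = x := fun x => DFunLike.congr_fun hinv' x
  have hmsym : ∀ x y : H, ⟪m x, y⟫ = ⟪x, m y⟫ := fun x y => hm.isSymmetric x y
  have hm'sym : ∀ x y : H, ⟪m' x, y⟫ = ⟪x, m' y⟫ := fun x y => hm'.isSymmetric x y
  -- component descriptions (using the defeq `WithLp 2 (H × H) = H × H`)
  have hA1 : ∀ z : WithLp 2 (H × H), (A z).fst = m z.fst - z.snd :=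
    fun z => congrArg Prod.fst (hA z)
  have hA2 : ∀ z : WithLp 2 (H × H), (A z).snd = At z.snd - z.fst :=
    fun z => congrArg Prod.snd (hA z)
  have hT1 : ∀ z : WithLp 2 (H × H), (T z).fst = m' z.fst :=
    fun z => congrArg Prod.fst (hT z)
  have hT2 : ∀ z : WithLp 2 (H × H), (T z).snd = At z.snd - m' z.snd :=
    fun z => congrArg Prod.snd (hT z)
  have hS1 : ∀ z : WithLp 2 (H × H), (S z).fst = m z.fst - z.snd :=
    fun z => congrArg Prod.fst (hS z)
  have hS2 : ∀ z : WithLp 2 (H × H), (S z).snd = z.snd := by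
    intro z
    have h := congrArg Prod.snd (hS z)
    exact h
  -- the continuous inverse of `S`
  set P : WithLp 2 (H × H) ≃L[ℝ] H × H := WithLp.prodContinuousLinearEquiv 2 ℝ H H with hP
  set R : WithLp 2 (H × H) →L[ℝ] WithLp 2 (H × H) :=
    ((P.symm : (H × H) →L[ℝ] WithLp 2 (H × H)).comp
      (((m'.comp ((ContinuousLinearMap.fst ℝ H H) + (ContinuousLinearMap.snd ℝ H H))).prod
        (ContinuousLinearMap.snd ℝ H H)).comp (P : WithLp 2 (H × H) →L[ℝ] H × H))) with hR
  have hR1 : ∀ z : WithLp 2 (H × H), (R z).fst = m' (z.fst + z.snd) := fun z => rfl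
  have hR2 : ∀ z : WithLp 2 (H × H), (R z).snd = z.snd := fun z => rfl
  have hSR : ∀ y, S (R y) = y := by
    intro y
    have h1 : (S (R y)).fst = y.fst := by
      rw [hS1, hR1, hR2, hmm']; abel
    have h2 : (S (R y)).snd = y.snd := by rw [hS2, hR2]
    exact WithLp.ofLp_injective 2 (Prod.ext h1 h2)
  have hRS : ∀ x, R (S x) = x := by
    intro x
    have h1 : (R (S x)).fst = x.fst := by
      rw [hR1, hS1, hS2]
      rw [sub_add_cancel, hm'm]
    have h2 : (R (S x)).snd = x.snd := by rw [hR2, hS2]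
    exact WithLp.ofLp_injective 2 (Prod.ext h1 h2)
  have hSinj : Function.Injective S := Function.LeftInverse.injective hRS
  -- the factorization
  have hfact : A = (ContinuousLinearMap.adjoint S).toLinearMap ∘ₗ T ∘ₗ S.toLinearMap := by
    apply LinearMap.ext
    intro z
    apply ext_inner_left ℝ
    intro w
    rw [LinearMap.comp_apply, LinearMap.comp_apply, ContinuousLinearMap.coe_coe,
      ContinuousLinearMap.coe_coe, ContinuousLinearMap.adjoint_inner_right]
    rw [WithLp.prod_inner_apply, WithLp.prod_inner_apply]
    change ⟪w.fst, (A z).fst⟫ + ⟪w.snd, (A z).snd⟫ = ⟪(S w).fst, (T (S z)).fst⟫ + ⟪(S w).snd, (T (S z)).snd⟫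
    rw [hA1, hA2, hT1, hT2, hS1, hS1, hS2, hS2]
    have expand : m' (m z.fst - z.snd) = z.fst - m' z.snd := by
      rw [map_sub, hm'm]
    rw [inner_sub_left (𝕜 := ℝ), hmsym, hmm', expand]
    simp only [inner_sub_right (𝕜 := ℝ)]
    ring
  refine ⟨hfact, ?_, ?_⟩
  -- quadratic form identity
  · have hinner : ∀ x, ⟪x, A x⟫ = ⟪S x, T (S x)⟫ := by
      intro x
      rw [hfact]
      simp only [LinearMap.comp_apply, ContinuousLinearMap.coe_coe]
      exact ContinuousLinearMap.adjoint_inner_right S _ _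
    have hne : ∀ x : WithLp 2 (H × H), x ≠ 0 ↔ S x ≠ 0 := by
      intro x
      constructor
      · intro hx h
        exact hx (hSinj (by simpa using h))
      · intro hx h
        exact hx (by simp [h])
    have hzero : ∀ x, A x = 0 ↔ T (S x) = 0 := by
      intro x
      have hAx : A x = ContinuousLinearMap.adjoint S (T (S x)) := by
        rw [hfact]; rfl
      have hadjinj : Function.Injective (ContinuousLinearMap.adjoint S) := by
        have hcomp : S.comp R = ContinuousLinearMap.id ℝ _ :=
          ContinuousLinearMap.ext hSR
        have : (ContinuousLinearMap.adjoint R).comp (ContinuousLinearMap.adjoint S) =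
            ContinuousLinearMap.id ℝ _ := by
          rw [← ContinuousLinearMap.adjoint_comp, hcomp, ContinuousLinearMap.adjoint_id]
        intro a b hab
        have ha := DFunLike.congr_fun this a
        have hb := DFunLike.congr_fun this b
        simp only [ContinuousLinearMap.comp_apply, ContinuousLinearMap.id_apply] at ha hb
        rw [← ha, ← hb, hab]
      constructor
      · intro h
        apply hadjinj
        rw [← hAx, h, map_zero]
      · intro h
        rw [hAx, h, map_zero]
    refine ⟨?_, ?_, ?_⟩
    · exact congrArg sSup (sig_set_congr (fun x => x ≠ 0 → ⟪x, A x⟫ < 0)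
        (fun y => y ≠ 0 → ⟪y, T y⟫ < 0) S R hSR hRS (fun x => by
          constructor
          · intro h hx; rw [← hinner]; exact h ((hne x).2 hx)
          · intro h hx; rw [hinner]; exact h ((hne x).1 hx)))
    · exact congrArg sSup (sig_set_congr (fun x => A x = 0)
        (fun y => T y = 0) S R hSR hRS hzero)
    · exact congrArg sSup (sig_set_congr (fun x => x ≠ 0 → 0 < ⟪x, A x⟫)
        (fun y => y ≠ 0 → 0 < ⟪y, T y⟫) S R hSR hRS (fun x => by
          constructor
          · intro h hx; rw [← hinner]; exact h ((hne x).2 hx)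
          · intro h hx; rw [hinner]; exact h ((hne x).1 hx)))
  -- the eigenvalue consequence
  · rintro ⟨ψ, lam, hψ, hlam, heig, hposc⟩
    have hinner : ∀ x, ⟪x, A x⟫ = ⟪S x, T (S x)⟫ := by
      intro x
      rw [hfact]
      simp only [LinearMap.comp_apply, ContinuousLinearMap.coe_coe]
      exact ContinuousLinearMap.adjoint_inner_right S _ _
    have hne : ∀ x : WithLp 2 (H × H), x ≠ 0 ↔ S x ≠ 0 := by
      intro x
      constructor
      · intro hx h
        exact hx (hSinj (by simpa using h))
      · intro hx h
        exact hx (by simp [h])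
    have hsigAT : sigNegOp A = sigNegOp T :=
      congrArg sSup (sig_set_congr (fun x => x ≠ 0 → ⟪x, A x⟫ < 0)
        (fun y => y ≠ 0 → ⟪y, T y⟫ < 0) S R hSR hRS (fun x => by
          constructor
          · intro h hx; rw [← hinner]; exact h ((hne x).2 hx)
          · intro h hx; rw [hinner]; exact h ((hne x).1 hx)))
    rw [hsigAT]
    -- the quadratic form of T
    have hTform : ∀ z : WithLp 2 (H × H),
        ⟪z, T z⟫ = ⟪z.fst, m' z.fst⟫ + ⟪z.snd, At z.snd - m' z.snd⟫ := by
      intro z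
      rw [WithLp.prod_inner_apply]; change ⟪z.fst, (T z).fst⟫ + ⟪z.snd, (T z).snd⟫ = _; rw [hT1, hT2]
    -- the distinguished negative vector
    set z₀ : WithLp 2 (H × H) := (WithLp.equiv 2 (H × H)).symm (0, ψ) with hz₀
    have hz₀1 : z₀.fst = 0 := rfl
    have hz₀2 : z₀.snd = ψ := rfl
    have hz₀ne : z₀ ≠ 0 := by
      intro h
      apply hψ
      have := congrArg WithLp.snd h
      exact this
    have hz₀neg : ⟪z₀, T z₀⟫ < 0 := by
      rw [hTform, hz₀1, hz₀2]
      have h1 : ⟪(0 : H), m' (0 : H)⟫ = 0 := by simp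
      have h2 : ⟪ψ, At ψ - m' ψ⟫ = lam * (‖ψ‖ ^ 2) := by
        rw [heig, real_inner_smul_right, real_inner_self_eq_norm_sq]
      rw [h1, h2, zero_add]
      have : (0 : ℝ) < ‖ψ‖ ^ 2 := pow_pos (norm_pos_iff.2 hψ) 2
      exact mul_neg_of_neg_of_pos hlam this
    unfold sigNegOp
    apply le_antisymm
    · -- every negative subspace has dimension at most 1
      apply sSup_le
      rintro n ⟨V, hVbot, hfd, hn, hneg⟩
      rw [hn]
      -- the linear functional x ↦ ⟪ψ, x.snd⟫ is injective on V
      have B_sym : ∀ x y : H, ⟪At x - m' x, y⟫ = ⟪x, At y - m' y⟫ := by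
        intro x y
        rw [inner_sub_left (𝕜 := ℝ), inner_sub_right (𝕜 := ℝ), hAt x y, hm'sym]
      let f : ↥V →ₗ[ℝ] ℝ :=
        { toFun := fun x => ⟪ψ, (x : WithLp 2 (H × H)).snd⟫
          map_add' := fun x y => by
            simp only [Submodule.coe_add]
            rw [WithLp.add_snd, inner_add_right (𝕜 := ℝ)]
          map_smul' := fun c x => by
            simp only [Submodule.coe_smul, RingHom.id_apply, smul_eq_mul]
            rw [WithLp.smul_snd, real_inner_smul_right] }
      have hfinj : Function.Injective f := by
        rw [← LinearMap.ker_eq_bot]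
        rw [Submodule.eq_bot_iff]
        rintro x hx
        by_contra hx0
        have hxne : (x : WithLp 2 (H × H)) ≠ 0 := by
          intro h
          exact hx0 (Subtype.ext h)
        have hxneg := hneg x x.2 hxne
        have hxperp : ⟪ψ, (x : WithLp 2 (H × H)).snd⟫ = 0 := hx
        have hperp' : ⟪(x : WithLp 2 (H × H)).snd, ψ⟫ = 0 := by
          rwa [real_inner_comm]
        have h2 : 0 ≤ ⟪(x : WithLp 2 (H × H)).snd,
            At (x : WithLp 2 (H × H)).snd - m' (x : WithLp 2 (H × H)).snd⟫ :=
          hposc _ hxperp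
        have h1 : 0 ≤ ⟪(x : WithLp 2 (H × H)).fst, m' (x : WithLp 2 (H × H)).fst⟫ := by
          rcases eq_or_ne (x : WithLp 2 (H × H)).fst 0 with h | h
          · rw [h]; simp
          · exact le_of_lt (hm'pos _ h)
        have : (0:ℝ) ≤ ⟪(x : WithLp 2 (H × H)), T (x : WithLp 2 (H × H))⟫ := by
          rw [hTform]
          exact add_nonneg h1 h2
        linarith
      have : Module.finrank ℝ V ≤ 1 := by
        have := LinearMap.finrank_le_finrank_of_injective hfinj
        simpa using this
      exact_mod_cast this
    · -- the span of z₀ is a 1-dimensional negative subspace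
      apply le_sSup
      refine ⟨Submodule.span ℝ {z₀}, ?_, ?_, ?_, ?_⟩
      · simpa [Submodule.span_singleton_eq_bot] using hz₀ne
      · infer_instance
      · rw [finrank_span_singleton hz₀ne]
        simp
      · intro x hx hxne
        obtain ⟨c, rfl⟩ := Submodule.mem_span_singleton.1 hx
        have hc : c ≠ 0 := by
          intro h
          exact hxne (by simp [h])
        have : ⟪c • z₀, T (c • z₀)⟫ = c ^ 2 * ⟪z₀, T z₀⟫ := by
          rw [map_smul, real_inner_smul_left, real_inner_smul_right]
          ring
        rw [this]
        have hc2 : (0:ℝ) < c ^ 2 := by positivity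
        exact mul_neg_of_pos_of_neg hc2 hz₀neg
end
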